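/- Define F : ℝ → ℝ by F(λ) = e^λ/(e^λ − 1) − 1/λ for λ ≠ 0 and F(0) = 1/2. Then F is continuous on ℝ, strictly increasing, and satisfies lim_{λ→−∞} F(λ) = 0 and lim_{λ→+∞} F(λ) = 1; in particular F is a bijection from ℝ onto the open interval (0,1), i.e. F is the cumulative-distribution-type function of a random variable taking values in (0,1). -/

import Mathlib

open Filter Topology

/-- The function F(λ) = e^λ/(e^λ − 1) − 1/λ for λ ≠ 0, F(0) = 1/2. -/
noncomputable def Ffun (l : ℝ) : ℝ :=
  if l = 0 then 1 / 2 else Real.exp l / (Real.exp l - 1) - 1 / l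

lemma exp_sub_one_ne {l : ℝ} (hl : l ≠ 0) : Real.exp l - 1 ≠ 0 := by
  simp [sub_ne_zero, Real.exp_eq_one_iff, hl]

lemma Ffun_eq {l : ℝ} (hl : l ≠ 0) :
    Ffun l = Real.exp l / (Real.exp l - 1) - 1 / l := if_neg hl

lemma Ffun_eventuallyEq {x : ℝ} (hx : x ≠ 0) :
    (fun l => Real.exp l / (Real.exp l - 1) - 1 / l) =ᶠ[𝓝 x] Ffun := by
  filter_upwards [isOpen_compl_singleton.mem_nhds hx] with l hl
  exact (Ffun_eq hl).symm

lemma hasDerivAt_Ffun {x : ℝ} (hx : x ≠ 0) :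
    HasDerivAt Ffun (1 / x ^ 2 - Real.exp x / (Real.exp x - 1) ^ 2) x := by
  have h1 : HasDerivAt (fun l => Real.exp l / (Real.exp l - 1))
      ((Real.exp x * (Real.exp x - 1) - Real.exp x * Real.exp x) / (Real.exp x - 1) ^ 2) x :=
    (Real.hasDerivAt_exp x).div ((Real.hasDerivAt_exp x).sub_const 1) (exp_sub_one_ne hx)
  have h2 : HasDerivAt (fun l : ℝ => 1 / l) (-(x ^ 2)⁻¹) x := by
    simpa [one_div] using hasDerivAt_inv hx
  have h := h1.sub h2
  have hne := exp_sub_one_ne hx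
  apply (h.congr_of_eventuallyEq (Ffun_eventuallyEq hx).symm).congr_deriv
  field_simp
  ring

lemma sinh_identity (x : ℝ) :
    Real.exp x - 1 = 2 * Real.exp (x / 2) * Real.sinh (x / 2) := by
  have e1 : Real.exp (x / 2) * Real.exp (x / 2) = Real.exp x := by
    rw [← Real.exp_add]; ring_nf
  have e2 : Real.exp (x / 2) * Real.exp (-(x / 2)) = 1 := by
    rw [← Real.exp_add]; simp
  rw [Real.sinh_eq]
  nlinarith [e1, e2]

lemma deriv_pos {x : ℝ} (hx : x ≠ 0) :
    0 < 1 / x ^ 2 - Real.exp x / (Real.exp x - 1) ^ 2 := by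
  have hsq : (Real.exp x - 1) ^ 2 = 4 * Real.exp x * Real.sinh (x / 2) ^ 2 := by
    rw [sinh_identity x]
    have e1 : Real.exp (x / 2) * Real.exp (x / 2) = Real.exp x := by
      rw [← Real.exp_add]; ring_nf
    linear_combination (4 * Real.sinh (x / 2) ^ 2) * e1
  have hxx : x ^ 2 < 4 * Real.sinh (x / 2) ^ 2 := by
    have h0 : 0 < |x| / 2 := by positivity
    have h1 : |x| / 2 < Real.sinh (|x| / 2) := Real.self_lt_sinh_iff.mpr h0
    have h2 : Real.sinh (x / 2) ^ 2 = Real.sinh (|x| / 2) ^ 2 := by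
      rw [← sq_abs (Real.sinh (x / 2)), Real.abs_sinh, abs_div]
      norm_num
    rw [h2]
    nlinarith [abs_nonneg x, sq_abs x]
  have key : Real.exp x * x ^ 2 < (Real.exp x - 1) ^ 2 := by
    rw [hsq]
    nlinarith [Real.exp_pos x]
  have hd1 : (0:ℝ) < x ^ 2 := by positivity
  have hd2 : (0:ℝ) < (Real.exp x - 1) ^ 2 := by
    have := exp_sub_one_ne hx; positivity
  rw [sub_pos, div_lt_div_iff₀ hd2 hd1]
  linarith

lemma inner_lhopital :
    Tendsto (fun l => l * Real.exp l / (Real.exp l - 1 + l * Real.exp l))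
      (𝓝[≠] (0:ℝ)) (𝓝 (1 / 2)) := by
  apply HasDerivAt.lhopital_zero_nhdsNE
    (f' := fun l => Real.exp l + l * Real.exp l)
    (g' := fun l => (2 + l) * Real.exp l)
  · filter_upwards with l
    have := (hasDerivAt_id l).mul (Real.hasDerivAt_exp l)
    exact this.congr_deriv (by unfold id; ring)
  · filter_upwards with l
    have := ((Real.hasDerivAt_exp l).sub_const 1).add
      ((hasDerivAt_id l).mul (Real.hasDerivAt_exp l))
    exact this.congr_deriv (by unfold id; ring)
  · have h : ∀ᶠ l in 𝓝 (0:ℝ), l ∈ Set.Ioo (-1:ℝ) 1 :=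
      Ioo_mem_nhds (by norm_num) (by norm_num)
    filter_upwards [nhdsWithin_le_nhds h] with l hl
    have h1 : (0:ℝ) < 2 + l := by linarith [hl.1]
    positivity
  · have : Tendsto (fun l => l * Real.exp l) (𝓝 (0:ℝ)) (𝓝 (0 * Real.exp 0)) :=
      (continuous_id.mul Real.continuous_exp).tendsto 0
    simpa using this.mono_left nhdsWithin_le_nhds
  · have : Tendsto (fun l => Real.exp l - 1 + l * Real.exp l) (𝓝 (0:ℝ))
        (𝓝 (Real.exp 0 - 1 + 0 * Real.exp 0)) :=
      ((Real.continuous_exp.sub continuous_const).add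
        (continuous_id.mul Real.continuous_exp)).tendsto 0
    simpa using this.mono_left nhdsWithin_le_nhds
  · have : Tendsto (fun l => (Real.exp l + l * Real.exp l) / ((2 + l) * Real.exp l))
        (𝓝 (0:ℝ)) (𝓝 ((Real.exp 0 + 0 * Real.exp 0) / ((2 + 0) * Real.exp 0))) := by
      apply Tendsto.div
      · exact (Real.continuous_exp.add (continuous_id.mul Real.continuous_exp)).tendsto 0
      · exact ((continuous_const.add continuous_id).mul Real.continuous_exp).tendsto 0
      · simp
    have h2 : (Real.exp 0 + 0 * Real.exp 0) / ((2 + 0) * Real.exp 0) = 1 / 2 := by simp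
    rw [h2] at this
    exact this.mono_left nhdsWithin_le_nhds

lemma outer_lhopital :
    Tendsto (fun l => (l * Real.exp l - Real.exp l + 1) / (l * (Real.exp l - 1)))
      (𝓝[≠] (0:ℝ)) (𝓝 (1 / 2)) := by
  apply HasDerivAt.lhopital_zero_nhdsNE
    (f' := fun l => l * Real.exp l)
    (g' := fun l => Real.exp l - 1 + l * Real.exp l)
  · filter_upwards with l
    have := (((hasDerivAt_id l).mul (Real.hasDerivAt_exp l)).sub
      (Real.hasDerivAt_exp l)).add_const 1
    exact this.congr_deriv (by unfold id; ring)
  · filter_upwards with l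
    have := (hasDerivAt_id l).mul ((Real.hasDerivAt_exp l).sub_const 1)
    exact this.congr_deriv (by unfold id; ring)
  · filter_upwards [self_mem_nhdsWithin] with l hl
    have hl : l ≠ 0 := hl
    rcases hl.lt_or_gt with h | h
    · have h1 : Real.exp l < 1 := Real.exp_lt_one_iff.mpr h
      have h2 : l * Real.exp l < 0 := mul_neg_of_neg_of_pos h (Real.exp_pos l)
      linarith
    · have h1 : 1 < Real.exp l := Real.one_lt_exp_iff.mpr h
      have h2 : 0 < l * Real.exp l := mul_pos h (Real.exp_pos l)
      linarith
  · have : Tendsto (fun l => l * Real.exp l - Real.exp l + 1) (𝓝 (0:ℝ))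
        (𝓝 (0 * Real.exp 0 - Real.exp 0 + 1)) :=
      (((continuous_id.mul Real.continuous_exp).sub Real.continuous_exp).add
        continuous_const).tendsto 0
    simpa using this.mono_left nhdsWithin_le_nhds
  · have : Tendsto (fun l => l * (Real.exp l - 1)) (𝓝 (0:ℝ))
        (𝓝 (0 * (Real.exp 0 - 1))) :=
      (continuous_id.mul (Real.continuous_exp.sub continuous_const)).tendsto 0
    simpa using this.mono_left nhdsWithin_le_nhds
  · exact inner_lhopital

lemma continuousAt_Ffun_zero : ContinuousAt Ffun 0 := by
  have key : Tendsto Ffun (𝓝[≠] (0:ℝ)) (𝓝 (1 / 2)) := by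
    apply outer_lhopital.congr'
    filter_upwards [self_mem_nhdsWithin] with l hl
    have hl : l ≠ 0 := hl
    rw [Ffun_eq hl]
    have hne := exp_sub_one_ne hl
    field_simp
    ring
  rw [ContinuousAt]
  have h0 : Ffun 0 = 1 / 2 := if_pos rfl
  rw [h0, ← nhdsNE_sup_pure (0:ℝ)]
  rw [tendsto_sup]
  refine ⟨key, ?_⟩
  rw [tendsto_pure_left]
  intro s hs
  rw [h0]
  exact mem_of_mem_nhds hs

lemma continuous_Ffun : Continuous Ffun := by
  rw [continuous_iff_continuousAt]
  intro x
  rcases eq_or_ne x 0 with rfl | hx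
  · exact continuousAt_Ffun_zero
  · have hne := exp_sub_one_ne hx
    have h : ContinuousAt (fun l => Real.exp l / (Real.exp l - 1) - 1 / l) x := by
      apply ContinuousAt.sub
      · exact (Real.continuous_exp.continuousAt).div
          ((Real.continuous_exp.sub continuous_const).continuousAt) hne
      · exact continuousAt_const.div continuousAt_id hx
    exact h.congr (Ffun_eventuallyEq hx)

lemma strictMono_Ffun : StrictMono Ffun := by
  have hderiv : ∀ x : ℝ, x ≠ 0 → 0 < deriv Ffun x := by
    intro x hx
    rw [(hasDerivAt_Ffun hx).deriv]
    exact deriv_pos hx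
  have h1 : StrictMonoOn Ffun (Set.Iic 0) := by
    apply strictMonoOn_of_deriv_pos (convex_Iic 0) continuous_Ffun.continuousOn
    intro x hx
    rw [interior_Iic] at hx
    exact hderiv x (ne_of_lt hx)
  have h2 : StrictMonoOn Ffun (Set.Ici 0) := by
    apply strictMonoOn_of_deriv_pos (convex_Ici 0) continuous_Ffun.continuousOn
    intro x hx
    rw [interior_Ici] at hx
    exact hderiv x (ne_of_gt hx)
  intro x y hxy
  rcases le_or_gt y 0 with hy | hy
  · exact h1 (Set.mem_Iic.mpr (hxy.le.trans hy)) (Set.mem_Iic.mpr hy) hxy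
  · rcases le_or_gt 0 x with hx | hx
    · exact h2 (Set.mem_Ici.mpr hx) (Set.mem_Ici.mpr (hx.trans hxy.le)) hxy
    · calc Ffun x < Ffun 0 := h1 (Set.mem_Iic.mpr hx.le) Set.self_mem_Iic hx
        _ < Ffun y := h2 Set.self_mem_Ici (Set.mem_Ici.mpr hy.le) hy

lemma tendsto_Ffun_atBot : Tendsto Ffun atBot (𝓝 0) := by
  have h1 : Tendsto (fun l => Real.exp l / (Real.exp l - 1)) atBot (𝓝 (0 / (0 - 1))) := by
    apply Tendsto.div Real.tendsto_exp_atBot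
      (Real.tendsto_exp_atBot.sub tendsto_const_nhds)
    norm_num
  have h2 : Tendsto (fun l : ℝ => 1 / l) atBot (𝓝 0) := by
    have h := (tendsto_inv_atTop_zero (𝕜 := ℝ)).comp tendsto_neg_atBot_atTop
    have h' := h.neg
    norm_num [Function.comp] at h'
    have heq : (fun x : ℝ => -(-x)⁻¹) = fun l : ℝ => 1 / l := by
      funext x; rw [inv_neg]; ring
    simpa [one_div] using h'
  have h := h1.sub h2
  norm_num at h
  apply h.congr'
  filter_upwards [eventually_lt_atBot (0:ℝ)] with l hl
  rw [Ffun_eq (ne_of_lt hl), one_div]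

lemma tendsto_Ffun_atTop : Tendsto Ffun atTop (𝓝 1) := by
  have h1 : Tendsto (fun l => 1 + (Real.exp l - 1)⁻¹) atTop (𝓝 (1 + 0)) := by
    apply Tendsto.add tendsto_const_nhds
    apply Tendsto.inv_tendsto_atTop
    exact tendsto_atTop_add_const_right _ (-1) Real.tendsto_exp_atTop
  have h2 : Tendsto (fun l : ℝ => 1 / l) atTop (𝓝 0) := by
    simpa [one_div] using tendsto_inv_atTop_zero
  have h := h1.sub h2
  norm_num at h
  apply h.congr'
  filter_upwards [eventually_gt_atTop (0:ℝ)] with l hl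
  rw [Ffun_eq (ne_of_gt hl)]
  have hne := exp_sub_one_ne (ne_of_gt hl)
  field_simp
  ring

/-- F is continuous on ℝ, strictly increasing, tends to 0 at −∞ and
to 1 at +∞; in particular F is a bijection from ℝ onto the open interval (0,1). -/
theorem stmt_17 :
    Continuous Ffun ∧ StrictMono Ffun ∧
    Tendsto Ffun atBot (𝓝 0) ∧ Tendsto Ffun atTop (𝓝 1) ∧
    Set.BijOn Ffun Set.univ (Set.Ioo (0 : ℝ) 1) := by
  refine ⟨continuous_Ffun, strictMono_Ffun, tendsto_Ffun_atBot, tendsto_Ffun_atTop, ?_, ?_, ?_⟩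
  · -- MapsTo
    intro x _
    constructor
    · have h1 : Ffun (x - 1) < Ffun x := strictMono_Ffun (by linarith)
      have h2 : (0:ℝ) ≤ Ffun (x - 1) :=
        strictMono_Ffun.monotone.le_of_tendsto tendsto_Ffun_atBot (x - 1)
      linarith
    · have h1 : Ffun x < Ffun (x + 1) := strictMono_Ffun (by linarith)
      have h2 : Ffun (x + 1) ≤ 1 :=
        strictMono_Ffun.monotone.ge_of_tendsto tendsto_Ffun_atTop (x + 1)
      linarith
  · exact strictMono_Ffun.injective.injOn
  · -- SurjOn
    intro y hy
    obtain ⟨a, ha⟩ := (tendsto_Ffun_atBot.eventually_lt_const hy.1).exists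
    obtain ⟨b, hb⟩ := (tendsto_Ffun_atTop.eventually_const_lt hy.2).exists
    have hab : a ≤ b := by
      by_contra h
      push_neg at h
      exact absurd (strictMono_Ffun h) (by linarith)
    have := intermediate_value_Icc hab continuous_Ffun.continuousOn
    have hy' : y ∈ Set.Icc (Ffun a) (Ffun b) := ⟨ha.le, hb.le⟩
    obtain ⟨x, _, hx⟩ := this hy'
    exact ⟨x, Set.mem_univ x, hx⟩
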